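/- With u_{2n}(a) defined by the recurrence (a^2+1)u_2=1 and (a^2+n^2)u_{2n}=3u_{2(n-1)}+3\sum_{j_1+j_2=n-1}u_{2j_1}u_{2j_2}+\sum_{j_1+j_2+j_3=n-1}u_{2j_1}u_{2j_2}u_{2j_3}-\sum_{2j_1<n}(n-2j_1)^2 u_{2j_1}u_{2(n-j_1)}, the value at a=0 is u_{2n}(0) = (n+1)/2^n for all n\ge 1. -/

import Mathlib

open RatFunc

noncomputable section AuxStmt7

abbrev KK := RatFunc ℚ

/-- The local subring of rational functions whose denominator does not vanish at `0`. -/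
def Rg : Subring KK where
  carrier := {x | Polynomial.eval₂ (RingHom.id ℚ) 0 x.denom ≠ 0}
  one_mem' := by simp [RatFunc.denom_one]
  zero_mem' := by simp [RatFunc.denom_zero]
  mul_mem' := by
    intro x y hx hy
    obtain ⟨c, hc⟩ := RatFunc.denom_mul_dvd x y
    have : Polynomial.eval₂ (RingHom.id ℚ) 0 (x.denom * y.denom) ≠ 0 := by
      rw [Polynomial.eval₂_mul]; exact mul_ne_zero hx hy
    rw [hc, Polynomial.eval₂_mul] at this
    exact fun h => this (by rw [h, zero_mul])
  add_mem' := by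
    intro x y hx hy
    obtain ⟨c, hc⟩ := RatFunc.denom_add_dvd x y
    have : Polynomial.eval₂ (RingHom.id ℚ) 0 (x.denom * y.denom) ≠ 0 := by
      rw [Polynomial.eval₂_mul]; exact mul_ne_zero hx hy
    rw [hc, Polynomial.eval₂_mul] at this
    exact fun h => this (by rw [h, zero_mul])
  neg_mem' := by
    intro x hx
    have hd1 : RatFunc.denom (-1 : KK) = 1 := by
      have h1 : (-1 : KK) = algebraMap (Polynomial ℚ) KK (-1) := by rw [map_neg, map_one]
      rw [h1, RatFunc.denom_algebraMap]
    obtain ⟨c, hc⟩ := RatFunc.denom_mul_dvd (-1 : KK) x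
    rw [hd1, one_mul, neg_one_mul] at hc
    intro h0
    exact hx (by rw [hc, Polynomial.eval₂_mul, h0, zero_mul])

/-- Evaluation at `0` as a ring hom on `Rg`. -/
def phi : Rg →+* ℚ where
  toFun x := RatFunc.eval (RingHom.id ℚ) 0 x.1
  map_one' := RatFunc.eval_one _ _
  map_zero' := RatFunc.eval_zero _ _
  map_mul' x y := RatFunc.eval_mul (f := RingHom.id ℚ) (a := 0) x.2 y.2
  map_add' x y := RatFunc.eval_add (f := RingHom.id ℚ) (a := 0) x.2 y.2

lemma X_mem : (RatFunc.X : KK) ∈ Rg := by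
  show Polynomial.eval₂ (RingHom.id ℚ) 0 (RatFunc.denom RatFunc.X) ≠ 0
  rw [RatFunc.denom_X]; simp

lemma phi_X : phi ⟨RatFunc.X, X_mem⟩ = 0 := by
  show RatFunc.eval (RingHom.id ℚ) 0 RatFunc.X = 0
  exact RatFunc.eval_X _ _

lemma inv_mem {p : Polynomial ℚ} (hp : Polynomial.eval₂ (RingHom.id ℚ) 0 p ≠ 0) :
    (algebraMap (Polynomial ℚ) KK p)⁻¹ ∈ Rg := by
  have h : (algebraMap (Polynomial ℚ) KK p)⁻¹
      = algebraMap (Polynomial ℚ) KK 1 / algebraMap (Polynomial ℚ) KK p := by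
    rw [map_one, one_div]
  have hd := RatFunc.denom_div_dvd (1 : Polynomial ℚ) p
  rw [← h] at hd
  obtain ⟨c, hc⟩ := hd
  intro h0
  exact hp (by rw [hc, Polynomial.eval₂_mul, h0, zero_mul])

lemma sum_adt_succ {M : Type*} [AddCommMonoid M] (k n : ℕ) (f : (Fin (k+1) → ℕ) → M) :
    ∑ t ∈ Finset.Nat.antidiagonalTuple (k+1) n, f t
      = ∑ p ∈ Finset.HasAntidiagonal.antidiagonal n, ∑ t ∈ Finset.Nat.antidiagonalTuple k p.2,
          f (Fin.cons p.1 t) := by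
  rw [Finset.sum_sigma']
  refine Finset.sum_nbij' (fun t => ⟨(t 0, ∑ i : Fin k, t i.succ), Fin.tail t⟩)
    (fun x => Fin.cons x.1.1 x.2) ?_ ?_ ?_ ?_ ?_
  · intro t ht
    rw [Finset.Nat.mem_antidiagonalTuple] at ht
    simp only [Finset.mem_sigma, Finset.HasAntidiagonal.mem_antidiagonal, Finset.Nat.mem_antidiagonalTuple]
    constructor
    · rw [← ht, Fin.sum_univ_succ]
    · rfl
  · intro x hx
    simp only [Finset.mem_sigma, Finset.HasAntidiagonal.mem_antidiagonal,
      Finset.Nat.mem_antidiagonalTuple] at hx ⊢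
    rw [Fin.sum_cons, hx.2, hx.1]
  · intro t _
    exact Fin.cons_self_tail t
  · intro x hx
    simp only [Finset.mem_sigma, Finset.HasAntidiagonal.mem_antidiagonal,
      Finset.Nat.mem_antidiagonalTuple] at hx
    simp only [Fin.cons_zero, Fin.cons_succ, Fin.tail_cons, hx.2]
  · intro t _
    rw [Fin.cons_self_tail]

lemma sum_poly4 (a0 a1 a2 a3 a4 : ℚ) (M : ℕ) :
    ∑ j ∈ Finset.range M, (a0 + a1*(j:ℚ) + a2*(j:ℚ)^2 + a3*(j:ℚ)^3 + a4*(j:ℚ)^4)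
      = a0*M + a1*((M:ℚ)^2-M)/2 + a2*(2*(M:ℚ)^3-3*(M:ℚ)^2+M)/6
        + a3*((M:ℚ)^4-2*(M:ℚ)^3+(M:ℚ)^2)/4 + a4*(6*(M:ℚ)^5-15*(M:ℚ)^4+10*(M:ℚ)^3-M)/30 := by
  induction M with
  | zero => simp
  | succ m ih => rw [Finset.sum_range_succ, ih]; push_cast; ring

lemma sum_antidiag_filter (m : ℕ) (f : ℕ → ℕ → ℚ) :
    ∑ p ∈ (Finset.HasAntidiagonal.antidiagonal m).filter (fun p => 1 ≤ p.1 ∧ 1 ≤ p.2), f p.1 p.2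
      = ∑ j ∈ Finset.range (m-1), f (j+1) (m-1-j) := by
  rcases Nat.eq_zero_or_pos m with rfl | hm
  · simp [Finset.filter_singleton]
  obtain ⟨M, rfl⟩ : ∃ M, m = M + 1 := ⟨m - 1, by omega⟩
  rw [Finset.sum_filter, Finset.Nat.sum_antidiagonal_eq_sum_range_succ_mk,
    Finset.sum_range_succ, Finset.sum_range_succ']
  have h2 : (M + 1) - (M + 1) = 0 := by omega
  rw [h2]
  have hlast : (if 1 ≤ M + 1 ∧ 1 ≤ (0:ℕ) then f (M+1) 0 else 0) = 0 := by simp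
  have hfirst : (if 1 ≤ 0 ∧ 1 ≤ M + 1 - 0 then f 0 (M+1-0) else 0) = 0 := by simp
  rw [hlast, hfirst, add_zero, add_zero]
  have hM : M + 1 - 1 = M := by omega
  rw [hM]
  refine Finset.sum_congr rfl fun j hj => ?_
  rw [Finset.mem_range] at hj
  have hc : 1 ≤ j + 1 ∧ 1 ≤ M + 1 - (j+1) := by omega
  rw [if_pos hc]
  congr 1
  omega

lemma sum_antidiag_if (m : ℕ) (g : ℕ → ℕ → ℚ) (hm : g m 0 = 0) :
    ∑ p ∈ Finset.HasAntidiagonal.antidiagonal m, (if 1 ≤ p.1 then g p.1 p.2 else 0)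
      = ∑ j ∈ Finset.range (m-1), g (j+1) (m-1-j) := by
  rcases Nat.eq_zero_or_pos m with rfl | hmpos
  · simp
  obtain ⟨M, rfl⟩ : ∃ M, m = M + 1 := ⟨m - 1, by omega⟩
  rw [Finset.Nat.sum_antidiagonal_eq_sum_range_succ_mk,
    Finset.sum_range_succ, Finset.sum_range_succ']
  have h2 : (M + 1) - (M + 1) = 0 := by omega
  rw [h2]
  have hlast : (if 1 ≤ M + 1 then g (M+1) 0 else 0) = 0 := by
    rw [if_pos (by omega)]; exact hm
  have hfirst : (if 1 ≤ (0:ℕ) then g 0 (M+1-0) else 0) = 0 := by simp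
  rw [hlast, hfirst, add_zero, add_zero]
  have hM : M + 1 - 1 = M := by omega
  rw [hM]
  refine Finset.sum_congr rfl fun j hj => ?_
  rw [Finset.mem_range] at hj
  rw [if_pos (by omega)]
  congr 1
  omega

lemma triple_reduce (vv : ℕ → ℚ) (m : ℕ) :
    ∑ t ∈ (Finset.Nat.antidiagonalTuple 3 m).filter (fun t => ∀ i, 1 ≤ t i), ∏ i, vv (t i)
      = ∑ p ∈ Finset.HasAntidiagonal.antidiagonal m, (if 1 ≤ p.1 then vv p.1 *
          (∑ q ∈ (Finset.HasAntidiagonal.antidiagonal p.2).filter (fun q => 1 ≤ q.1 ∧ 1 ≤ q.2),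
            vv q.1 * vv q.2) else 0) := by
  rw [Finset.sum_filter]
  rw [show (3:ℕ) = 2 + 1 from rfl]
  rw [sum_adt_succ 2 m (fun t => if (∀ i, 1 ≤ t i) then ∏ i, vv (t i) else 0)]
  refine Finset.sum_congr rfl fun p _ => ?_
  rw [Finset.Nat.antidiagonalTuple_two, Finset.sum_map]
  simp only [Equiv.coe_toEmbedding, piFinTwoEquiv_symm_apply, Fin.forall_fin_succ,
    Fin.forall_fin_two, Fin.cons_zero, Fin.cons_succ, Matrix.cons_val_zero,
    Matrix.cons_val_one, Matrix.head_cons, Fin.prod_univ_succ, Fin.prod_univ_two]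
  by_cases h1p : 1 ≤ p.1
  · rw [if_pos h1p, Finset.sum_filter, Finset.mul_sum]
    refine Finset.sum_congr rfl fun q _ => ?_
    by_cases hq : 1 ≤ q.1 ∧ 1 ≤ q.2
    · rw [if_pos ⟨h1p, hq.1, hq.2, fun i => i.elim0⟩, if_pos hq]
      ring
    · rw [if_neg (fun h => hq ⟨h.2.1, h.2.2.1⟩), if_neg hq, mul_zero]
  · rw [if_neg h1p]
    refine Finset.sum_eq_zero fun q _ => ?_
    exact if_neg (fun h => h1p h.1)

end AuxStmt7

set_option maxHeartbeats 1000000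
set_option synthInstance.maxHeartbeats 400000

/-- With `u n` (denoting `u_{2n}(a)`) in `ℚ(a)` defined by `(a²+1)u₂ = 1` and the recurrence
`(a²+n²)u_{2n} = 3u_{2(n-1)} + 3∑_{j₁+j₂=n-1} u_{2j₁}u_{2j₂}
+ ∑_{j₁+j₂+j₃=n-1} u_{2j₁}u_{2j₂}u_{2j₃} - ∑_{2j₁ < n} (n-2j₁)² u_{2j₁}u_{2(n-j₁)}`,
the value at `a = 0` is `u_{2n}(0) = (n+1)/2ⁿ` for all `n ≥ 1`. -/
theorem stmt_7 (u : ℕ → RatFunc ℚ)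
    (h1 : (X ^ 2 + 1) * u 1 = 1)
    (hrec : ∀ n : ℕ, 2 ≤ n →
      (X ^ 2 + (n : RatFunc ℚ) ^ 2) * u n =
        3 * u (n - 1)
        + 3 * ∑ p ∈ (Finset.HasAntidiagonal.antidiagonal (n - 1)).filter
            (fun p => 1 ≤ p.1 ∧ 1 ≤ p.2), u p.1 * u p.2
        + ∑ t ∈ (Finset.Nat.antidiagonalTuple 3 (n - 1)).filter
            (fun t => ∀ i, 1 ≤ t i), ∏ i, u (t i)
        - ∑ j ∈ (Finset.Ico 1 n).filter (fun j => 2 * j < n),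
            ((n - 2 * j : ℕ) : RatFunc ℚ) ^ 2 * u j * u (n - j)) :
    ∀ n : ℕ, 1 ≤ n →
      RatFunc.eval (RingHom.id ℚ) 0 (u n) = ((n : ℚ) + 1) / 2 ^ n := by
  classical
  have hXn : ∀ k : ℕ, ((RatFunc.X : KK)^2 + (k : KK)^2)
      = algebraMap (Polynomial ℚ) KK (Polynomial.X^2 + (k : Polynomial ℚ)^2) := by
    intro k
    rw [map_add, map_pow, RatFunc.algebraMap_X, map_pow, map_natCast]
  have hevk : ∀ k : ℕ, 1 ≤ k →
      Polynomial.eval₂ (RingHom.id ℚ) 0 (Polynomial.X^2 + (k : Polynomial ℚ)^2) ≠ 0 := by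
    intro k hk
    have hkq : (k:ℚ) ≠ 0 := Nat.cast_ne_zero.2 (by omega)
    simp [Polynomial.eval₂_add, Polynomial.eval₂_pow, hkq]
  have hne : ∀ k : ℕ, 1 ≤ k → ((RatFunc.X : KK)^2 + (k:KK)^2) ≠ 0 := by
    intro k hk
    rw [hXn k]
    refine RatFunc.algebraMap_ne_zero ?_
    intro h0
    exact hevk k hk (by rw [h0]; simp)
  have hmeminv : ∀ k : ℕ, 1 ≤ k → ((RatFunc.X : KK)^2 + (k:KK)^2)⁻¹ ∈ Rg := by
    intro k hk
    rw [hXn k]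
    exact inv_mem (hevk k hk)
  -- membership of u n in Rg
  have hu : ∀ n : ℕ, 1 ≤ n → u n ∈ Rg := by
    intro n
    induction n using Nat.strong_induction_on with
    | _ n ih =>
      intro hn
      by_cases hn2 : 2 ≤ n
      · have heq := hrec n hn2
        have hnz := hne n (by omega)
        have hun : u n = ((RatFunc.X:KK)^2 + (n:KK)^2)⁻¹ *
            (3 * u (n - 1)
            + 3 * ∑ p ∈ (Finset.HasAntidiagonal.antidiagonal (n - 1)).filter
                (fun p => 1 ≤ p.1 ∧ 1 ≤ p.2), u p.1 * u p.2
            + ∑ t ∈ (Finset.Nat.antidiagonalTuple 3 (n - 1)).filter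
                (fun t => ∀ i, 1 ≤ t i), ∏ i, u (t i)
            - ∑ j ∈ (Finset.Ico 1 n).filter (fun j => 2 * j < n),
                ((n - 2 * j : ℕ) : KK) ^ 2 * u j * u (n - j)) := by
          rw [← heq, inv_mul_cancel_left₀ hnz]
        rw [hun]
        refine Subring.mul_mem _ (hmeminv n (by omega)) ?_
        refine Subring.sub_mem _ (Subring.add_mem _ (Subring.add_mem _ ?_ ?_) ?_) ?_
        · exact Subring.mul_mem _ (ofNat_mem Rg 3) (ih (n-1) (by omega) (by omega))
        · refine Subring.mul_mem _ (ofNat_mem Rg 3) (Subring.sum_mem _ ?_)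
          intro p hp
          simp only [Finset.mem_filter, Finset.HasAntidiagonal.mem_antidiagonal] at hp
          exact Subring.mul_mem _ (ih p.1 (by omega) (by omega)) (ih p.2 (by omega) (by omega))
        · refine Subring.sum_mem _ ?_
          intro t ht
          simp only [Finset.mem_filter, Finset.Nat.mem_antidiagonalTuple] at ht
          refine Subring.prod_mem _ ?_
          intro i _
          have h1 : 1 ≤ t i := ht.2 i
          have h2 : t i < n := by
            have : t i ≤ ∑ j, t j := Finset.single_le_sum (fun j _ => Nat.zero_le _)
              (Finset.mem_univ i)
            omega
          exact ih (t i) h2 h1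
        · refine Subring.sum_mem _ ?_
          intro j hj
          simp only [Finset.mem_filter, Finset.mem_Ico] at hj
          refine Subring.mul_mem _ (Subring.mul_mem _ ?_ (ih j (by omega) (by omega)))
            (ih (n-j) (by omega) (by omega))
          exact Subring.pow_mem _ (natCast_mem Rg _) 2
      · have hn1 : n = 1 := by omega
        subst hn1
        have hun : u 1 = ((RatFunc.X:KK)^2 + 1)⁻¹ := eq_inv_of_mul_eq_one_right h1
        rw [hun]
        have h11 : ((RatFunc.X:KK)^2 + 1) = ((RatFunc.X:KK)^2 + ((1:ℕ):KK)^2) := by norm_num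
        rw [h11]
        exact hmeminv 1 le_rfl
  -- lifted elements
  set U : ℕ → Rg := fun k => if h : 1 ≤ k then ⟨u k, hu k h⟩ else 1 with hU
  have hUcoe : ∀ k, 1 ≤ k → ((U k : Rg) : KK) = u k := by
    intro k hk; simp [hU, hk]
  have hphiU : ∀ k, 1 ≤ k → phi (U k) = RatFunc.eval (RingHom.id ℚ) 0 (u k) := by
    intro k hk
    simp only [hU, dif_pos hk]
    rfl
  -- main value induction
  intro n
  induction n using Nat.strong_induction_on with
  | _ n ih =>
    intro hn
    by_cases hn2 : 2 ≤ n
    case neg =>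
      have hn1 : n = 1 := by omega
      subst hn1
      have hl : ((⟨RatFunc.X, X_mem⟩ : Rg)^2 + 1) * U 1 = 1 := by
        apply Subtype.coe_injective
        push_cast [hUcoe 1 le_rfl]
        exact h1
      have hv := congrArg phi hl
      simp only [map_mul, map_add, map_pow, map_one, phi_X] at hv
      rw [hphiU 1 le_rfl] at hv
      norm_num at hv
      rw [hv]
      norm_num
    case pos =>
      -- the evaluated values
      set vv : ℕ → ℚ := fun k => ((k:ℚ)+1)/2^k with hvv
      have hval : ∀ k, 1 ≤ k → k < n → phi (U k) = vv k := by
        intro k h1k h2k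
        rw [hphiU k h1k, ih k h2k h1k]
      -- the lifted recurrence
      have hl : ((⟨RatFunc.X, X_mem⟩ : Rg)^2 + (n:Rg)^2) * U n =
          3 * U (n - 1)
          + 3 * ∑ p ∈ (Finset.HasAntidiagonal.antidiagonal (n - 1)).filter
              (fun p => 1 ≤ p.1 ∧ 1 ≤ p.2), U p.1 * U p.2
          + ∑ t ∈ (Finset.Nat.antidiagonalTuple 3 (n - 1)).filter
              (fun t => ∀ i, 1 ≤ t i), ∏ i, U (t i)
          - ∑ j ∈ (Finset.Ico 1 n).filter (fun j => 2 * j < n),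
              ((n - 2 * j : ℕ) : Rg) ^ 2 * U j * U (n - j) := by
        apply Subtype.coe_injective
        push_cast
        rw [hUcoe n (by omega), hUcoe (n-1) (by omega)]
        have e1 : ∑ p ∈ (Finset.HasAntidiagonal.antidiagonal (n - 1)).filter
            (fun p => 1 ≤ p.1 ∧ 1 ≤ p.2), ((U p.1 : Rg) : KK) * ((U p.2 : Rg) : KK)
            = ∑ p ∈ (Finset.HasAntidiagonal.antidiagonal (n - 1)).filter
            (fun p => 1 ≤ p.1 ∧ 1 ≤ p.2), u p.1 * u p.2 := by
          refine Finset.sum_congr rfl fun p hp => ?_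
          simp only [Finset.mem_filter] at hp
          rw [hUcoe p.1 hp.2.1, hUcoe p.2 hp.2.2]
        have e2 : ∑ t ∈ (Finset.Nat.antidiagonalTuple 3 (n - 1)).filter
            (fun t => ∀ i, 1 ≤ t i), ∏ i, ((U (t i) : Rg) : KK)
            = ∑ t ∈ (Finset.Nat.antidiagonalTuple 3 (n - 1)).filter
            (fun t => ∀ i, 1 ≤ t i), ∏ i, u (t i) := by
          refine Finset.sum_congr rfl fun t ht => ?_
          simp only [Finset.mem_filter] at ht
          exact Finset.prod_congr rfl fun i _ => hUcoe (t i) (ht.2 i)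
        have e3 : ∑ j ∈ (Finset.Ico 1 n).filter (fun j => 2 * j < n),
            ((n - 2*j : ℕ) : KK) ^ 2 * ((U j : Rg) : KK) * ((U (n-j) : Rg) : KK)
            = ∑ j ∈ (Finset.Ico 1 n).filter (fun j => 2 * j < n),
            ((n - 2*j : ℕ) : KK) ^ 2 * u j * u (n - j) := by
          refine Finset.sum_congr rfl fun j hj => ?_
          simp only [Finset.mem_filter, Finset.mem_Ico] at hj
          rw [hUcoe j (by omega), hUcoe (n-j) (by omega)]
        rw [e1, e2, e3]
        exact hrec n hn2
      -- apply phi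
      have hv := congrArg phi hl
      simp only [map_mul, map_add, map_sub, map_pow, map_sum, map_prod, map_natCast,
        map_ofNat, phi_X] at hv
      rw [hphiU n (by omega), hval (n-1) (by omega) (by omega)] at hv
      -- identify the three sums
      obtain ⟨m, rfl⟩ : ∃ m, n = m + 1 := ⟨n - 1, by omega⟩
      have hm1 : 1 ≤ m := by omega
      simp only [Nat.add_sub_cancel] at hv
      -- closed form for the filtered pair sums
      have hW : ∀ s : ℕ, 1 ≤ s → s ≤ m →
          (∑ q ∈ (Finset.HasAntidiagonal.antidiagonal s).filter (fun q => 1 ≤ q.1 ∧ 1 ≤ q.2),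
            vv q.1 * vv q.2)
            = ((s:ℚ)+1)*((s:ℚ)+6)*((s:ℚ)-1)/6/2^s := by
        intro s h1s hsm
        rw [sum_antidiag_filter s (fun a b => vv a * vv b)]
        have hstep : ∀ j ∈ Finset.range (s-1), vv (j+1) * vv (s-1-j)
            = (2*(s:ℚ) + ((s:ℚ)-2)*(j:ℚ) + (-1)*(j:ℚ)^2 + 0*(j:ℚ)^3 + 0*(j:ℚ)^4)/2^s := by
          intro j hj
          rw [Finset.mem_range] at hj
          have hc1 : ((s-1-j:ℕ):ℚ) = (s:ℚ)-1-(j:ℚ) := by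
            rw [Nat.cast_sub (by omega), Nat.cast_sub (by omega), Nat.cast_one]
          have hp : (2:ℚ)^(j+1) * 2^(s-1-j) = 2^s := by
            rw [← pow_add]; congr 1; omega
          simp only [hvv]
          rw [div_mul_div_comm, hp, hc1]
          congr 1
          push_cast
          ring
        rw [Finset.sum_congr rfl hstep, ← Finset.sum_div, sum_poly4]
        have hM : ((s-1:ℕ):ℚ) = (s:ℚ)-1 := by
          rw [Nat.cast_sub (by omega), Nat.cast_one]
        rw [hM]
        congr 1
        ring
      -- Sum over pairs
      have hS1 : (∑ p ∈ (Finset.HasAntidiagonal.antidiagonal m).filter (fun p => 1 ≤ p.1 ∧ 1 ≤ p.2),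
          phi (U p.1) * phi (U p.2))
          = ((m:ℚ)+1)*((m:ℚ)+6)*((m:ℚ)-1)/6/2^m := by
        rw [← hW m hm1 le_rfl]
        refine Finset.sum_congr rfl fun p hp => ?_
        simp only [Finset.mem_filter, Finset.HasAntidiagonal.mem_antidiagonal] at hp
        rw [hval p.1 hp.2.1 (by omega), hval p.2 hp.2.2 (by omega)]
      -- Sum over triples
      have hS2 : (∑ t ∈ (Finset.Nat.antidiagonalTuple 3 m).filter (fun t => ∀ i, 1 ≤ t i),
          ∏ i, phi (U (t i)))
          = (∑ j ∈ Finset.range (m-1), (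
              (2*(m:ℚ)^3+6*(m:ℚ)^2-20*(m:ℚ))/6
              + ((m:ℚ)^3-3*(m:ℚ)^2-22*(m:ℚ)+20)/6*(j:ℚ)
              + (16-3*(m:ℚ)^2)/6*(j:ℚ)^2
              + (3*(m:ℚ)+1)/6*(j:ℚ)^3
              + (-1/6)*(j:ℚ)^4))/2^m := by
        have hphi2vv : (∑ t ∈ (Finset.Nat.antidiagonalTuple 3 m).filter
            (fun t => ∀ i, 1 ≤ t i), ∏ i, phi (U (t i)))
            = ∑ t ∈ (Finset.Nat.antidiagonalTuple 3 m).filter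
            (fun t => ∀ i, 1 ≤ t i), ∏ i, vv (t i) := by
          refine Finset.sum_congr rfl fun t ht => ?_
          simp only [Finset.mem_filter, Finset.Nat.mem_antidiagonalTuple] at ht
          refine Finset.prod_congr rfl fun i _ => ?_
          have h2 : t i < m + 1 := by
            have : t i ≤ ∑ j, t j := Finset.single_le_sum (fun j _ => Nat.zero_le _)
              (Finset.mem_univ i)
            omega
          exact hval (t i) (ht.2 i) h2
        rw [hphi2vv, triple_reduce vv m]
        have hz : vv m * (∑ q ∈ (Finset.HasAntidiagonal.antidiagonal 0).filter
            (fun q => 1 ≤ q.1 ∧ 1 ≤ q.2), vv q.1 * vv q.2) = 0 := by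
          simp [Finset.Nat.antidiagonal_zero, Finset.filter_singleton]
        rw [sum_antidiag_if m (fun a b => vv a *
            (∑ q ∈ (Finset.HasAntidiagonal.antidiagonal b).filter (fun q => 1 ≤ q.1 ∧ 1 ≤ q.2),
              vv q.1 * vv q.2)) hz]
        have hstep : ∀ j ∈ Finset.range (m-1), vv (j+1) *
            (∑ q ∈ (Finset.HasAntidiagonal.antidiagonal (m-1-j)).filter (fun q => 1 ≤ q.1 ∧ 1 ≤ q.2),
              vv q.1 * vv q.2)
            = ((2*(m:ℚ)^3+6*(m:ℚ)^2-20*(m:ℚ))/6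
              + ((m:ℚ)^3-3*(m:ℚ)^2-22*(m:ℚ)+20)/6*(j:ℚ)
              + (16-3*(m:ℚ)^2)/6*(j:ℚ)^2
              + (3*(m:ℚ)+1)/6*(j:ℚ)^3
              + (-1/6)*(j:ℚ)^4)/2^m := by
          intro j hj
          rw [Finset.mem_range] at hj
          rw [hW (m-1-j) (by omega) (by omega)]
          have hc1 : ((m-1-j:ℕ):ℚ) = (m:ℚ)-1-(j:ℚ) := by
            rw [Nat.cast_sub (by omega), Nat.cast_sub (by omega), Nat.cast_one]
          have hp : (2:ℚ)^(j+1) * 2^(m-1-j) = 2^m := by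
            rw [← pow_add]; congr 1; omega
          simp only [hvv]
          rw [hc1, div_mul_div_comm, hp]
          congr 1
          push_cast
          ring
        rw [Finset.sum_congr rfl hstep, ← Finset.sum_div]
      -- Sum over j with 2j < n
      set hh : ℕ := (m + 2) / 2 with hhh
      have hhm : 1 ≤ hh := by simp only [hhh]; omega
      have hS3 : (∑ j ∈ (Finset.Ico 1 (m+1)).filter (fun j => 2 * j < m + 1),
          ((m + 1 - 2*j : ℕ) : ℚ) ^ 2 * phi (U j) * phi (U (m+1-j)))
          = (∑ i ∈ Finset.range (hh-1), (
              (2*((m:ℚ)+1)^3-8*((m:ℚ)+1)^2+8*((m:ℚ)+1))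
              + (((m:ℚ)+1)^3-14*((m:ℚ)+1)^2+28*((m:ℚ)+1)-8)*(i:ℚ)
              + (-5*((m:ℚ)+1)^2+28*((m:ℚ)+1)-20)*(i:ℚ)^2
              + (8*((m:ℚ)+1)-16)*(i:ℚ)^3
              + (-4)*(i:ℚ)^4))/2^(m+1) := by
        have hIco : (Finset.Ico 1 (m+1)).filter (fun j => 2 * j < m + 1)
            = Finset.Ico 1 hh := by
          ext j
          simp only [Finset.mem_filter, Finset.mem_Ico, hhh]
          omega
        rw [hIco, Finset.sum_Ico_eq_sum_range]
        have hstep : ∀ i ∈ Finset.range (hh-1),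
            ((m + 1 - 2*(1+i) : ℕ) : ℚ) ^ 2 * phi (U (1+i)) * phi (U (m+1-(1+i)))
            = ((2*((m:ℚ)+1)^3-8*((m:ℚ)+1)^2+8*((m:ℚ)+1))
              + (((m:ℚ)+1)^3-14*((m:ℚ)+1)^2+28*((m:ℚ)+1)-8)*(i:ℚ)
              + (-5*((m:ℚ)+1)^2+28*((m:ℚ)+1)-20)*(i:ℚ)^2
              + (8*((m:ℚ)+1)-16)*(i:ℚ)^3
              + (-4)*(i:ℚ)^4)/2^(m+1) := by
          intro i hi
          rw [Finset.mem_range] at hi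
          have hi2 : 2 * (1 + i) < m + 1 := by
            simp only [hhh] at hi
            omega
          rw [hval (1+i) (by omega) (by omega), hval (m+1-(1+i)) (by omega) (by omega)]
          have hc1 : ((m+1-(1+i):ℕ):ℚ) = (m:ℚ)-(i:ℚ) := by
            rw [Nat.cast_sub (by omega)]
            push_cast
            ring
          have hc2 : ((m+1-2*(1+i):ℕ):ℚ) = (m:ℚ)+1-2*(1+(i:ℚ)) := by
            rw [Nat.cast_sub (by omega)]
            push_cast
            ring
          have hp : (2:ℚ)^(1+i) * 2^(m+1-(1+i)) = 2^(m+1) := by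
            rw [← pow_add]; congr 1; omega
          simp only [hvv]
          have key : ∀ A B C : ℚ, (A*(B/(2:ℚ)^(1+i))*(C/(2:ℚ)^(m+1-(1+i))))
              = A*B*C/((2:ℚ)^(1+i)*(2:ℚ)^(m+1-(1+i))) := by intros; ring
          rw [hc1, hc2, key, hp]
          congr 1
          push_cast
          ring
        rw [Finset.sum_congr rfl hstep, ← Finset.sum_div]
      rw [hS1, hS2, hS3, sum_poly4, sum_poly4] at hv
      -- final computation
      have hMm : ((m-1:ℕ):ℚ) = (m:ℚ)-1 := by
        rw [Nat.cast_sub (by omega), Nat.cast_one]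
      have hHh : ((hh-1:ℕ):ℚ) = (hh:ℚ)-1 := by
        rw [Nat.cast_sub hhm, Nat.cast_one]
      rw [hMm, hHh] at hv
      simp only [hvv] at hv
      have h2n : (2:ℚ)^(m+1) = 2 * 2^m := by rw [pow_succ]; ring
      push_cast at hv ⊢
      rw [h2n] at hv ⊢
      have hcases : (m:ℚ) = 2*(hh:ℚ) - 2 ∨ (m:ℚ) = 2*(hh:ℚ) - 1 := by
        have hsplit : m + 2 = 2 * hh ∨ m + 1 = 2 * hh := by
          simp only [hhh]
          omega
        rcases hsplit with h | h
        · left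
          have h2 : (m:ℚ) + 2 = 2*(hh:ℚ) := by exact_mod_cast congrArg (Nat.cast (R := ℚ)) h
          linarith
        · right
          have h2 : (m:ℚ) + 1 = 2*(hh:ℚ) := by exact_mod_cast congrArg (Nat.cast (R := ℚ)) h
          linarith
      have hcoef : ((0:ℚ)^2 + ((m:ℚ)+1)^2) ≠ 0 := by positivity
      have h2me : (2:ℚ)^m ≠ 0 := by positivity
      apply mul_left_cancel₀ hcoef
      rw [hv]
      rcases hcases with hc | hc <;> rw [hc] <;> field_simp <;> ring
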